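/- arXiv:1403.4142 — 4 statements merged into one kernel-verified Lean document; each statement's English description precedes it below -/
import Mathlib

section
/- Counting eigenvalues via an LDLᵀ factorization of the shifted matrix: let A be a real symmetric n×n matrix, σ ∈ ℝ, and suppose A − σI = L D Lᵀ where L is an invertible real n×n matrix and D is a diagonal real n×n matrix. Then the number of eigenvalues of A that are less than σ (counted with multiplicity) equals the number of indices i with D_{ii} < 0. -/
open Matrix

section Aux

variable {n : ℕ}

/-- Extension-by-zero linear map from functions on a finset to functions on `Fin n`. -/
noncomputable def extMap (S : Finset (Fin n)) : (↥S → ℝ) →ₗ[ℝ] (Fin n → ℝ) where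
  toFun c i := if h : i ∈ S then c ⟨i, h⟩ else 0
  map_add' c d := by funext i; by_cases h : i ∈ S <;> simp [h]
  map_smul' r c := by funext i; by_cases h : i ∈ S <;> simp [h]

lemma key_le (d1 d2 : Fin n → ℝ) (M : Matrix (Fin n) (Fin n) ℝ) (hM : IsUnit M)
    (h : Matrix.diagonal d1 = M * Matrix.diagonal d2 * Mᵀ) :
    (Finset.univ.filter fun i => d1 i < 0).card
      ≤ (Finset.univ.filter fun i => d2 i < 0).card := by
  classical
  set S1 := Finset.univ.filter fun i => d1 i < 0 with hS1
  set S2 := Finset.univ.filter fun i => d2 i < 0 with hS2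
  -- the linear map
  let φ : (↥S1 → ℝ) →ₗ[ℝ] (↥S2 → ℝ) :=
    (LinearMap.funLeft ℝ ℝ (fun j : ↥S2 => (j : Fin n))).comp
      ((Mᵀ.mulVecLin).comp (extMap S1))
  have hinj : Function.Injective φ := by
    rw [injective_iff_map_eq_zero]
    intro c hc
    set x : Fin n → ℝ := extMap S1 c with hx
    set y : Fin n → ℝ := Mᵀ *ᵥ x with hy
    have hyS2 : ∀ j : Fin n, j ∈ S2 → y j = 0 := by
      intro j hj
      have := congrFun hc ⟨j, hj⟩
      simpa [φ, LinearMap.funLeft, y, x, Matrix.mulVec_transpose] using this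
    -- quadratic form identity
    have hquad : x ⬝ᵥ (Matrix.diagonal d1 *ᵥ x) = y ⬝ᵥ (Matrix.diagonal d2 *ᵥ y) := by
      simp only [h, hy, ← Matrix.mulVec_mulVec, Matrix.dotProduct_mulVec,
        Matrix.mulVec_transpose]
    have hy_nonneg : 0 ≤ y ⬝ᵥ (Matrix.diagonal d2 *ᵥ y) := by
      rw [dotProduct]
      apply Finset.sum_nonneg
      intro i _
      rw [Matrix.mulVec_diagonal]
      by_cases hi : i ∈ S2
      · rw [hyS2 i hi]; simp
      · have hd : 0 ≤ d2 i := not_lt.mp (by simpa [hS2] using hi)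
        calc (0:ℝ) ≤ d2 i * (y i * y i) := mul_nonneg hd (mul_self_nonneg _)
          _ = y i * (d2 i * y i) := by ring
    have hterms : ∀ i ∈ (Finset.univ : Finset (Fin n)), x i * (d1 i * x i) ≤ 0 := by
      intro i _
      by_cases hi : i ∈ S1
      · have hd : d1 i < 0 := by simpa [hS1] using hi
        calc x i * (d1 i * x i) = d1 i * (x i * x i) := by ring
          _ ≤ 0 := mul_nonpos_of_nonpos_of_nonneg (le_of_lt hd) (mul_self_nonneg _)
      · have hx0 : x i = 0 := by simp [hx, extMap, hi]
        simp [hx0]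
    have hsum0 : ∑ i, x i * (d1 i * x i) = 0 := by
      have hle : ∑ i, x i * (d1 i * x i) ≤ 0 := Finset.sum_nonpos hterms
      have hge : 0 ≤ ∑ i, x i * (d1 i * x i) := by
        have : x ⬝ᵥ (Matrix.diagonal d1 *ᵥ x) = ∑ i, x i * (d1 i * x i) := by
          simp [dotProduct, Matrix.mulVec_diagonal]
        rw [← this, hquad]; exact hy_nonneg
      linarith
    have hall : ∀ i ∈ (Finset.univ : Finset (Fin n)), x i * (d1 i * x i) = 0 :=
      (Finset.sum_eq_zero_iff_of_nonpos hterms).mp hsum0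
    funext j
    obtain ⟨i, hi⟩ := j
    have hd : d1 i < 0 := by simpa [hS1] using hi
    have hxi : x i = 0 := by
      have h0 := hall i (Finset.mem_univ i)
      by_contra hne
      have : x i * (d1 i * x i) < 0 := by nlinarith [mul_self_pos.mpr hne]
      linarith
    have : x i = c ⟨i, hi⟩ := by simp [hx, extMap, hi]
    simp [Pi.zero_apply, ← this, hxi]
  have hfin := LinearMap.finrank_le_finrank_of_injective hinj
  rw [Module.finrank_fintype_fun_eq_card, Module.finrank_fintype_fun_eq_card,
    Fintype.card_coe, Fintype.card_coe] at hfin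
  exact hfin

lemma key_eq (d1 d2 : Fin n → ℝ) (M : Matrix (Fin n) (Fin n) ℝ) (hM : IsUnit M)
    (h : Matrix.diagonal d1 = M * Matrix.diagonal d2 * Mᵀ) :
    (Finset.univ.filter fun i => d1 i < 0).card
      = (Finset.univ.filter fun i => d2 i < 0).card := by
  have hdet : IsUnit M.det := (Matrix.isUnit_iff_isUnit_det M).mp hM
  have hinv : M⁻¹ * M = 1 := Matrix.nonsing_inv_mul M hdet
  have hinvT : Mᵀ * Mᵀ⁻¹ = 1 :=
    Matrix.mul_nonsing_inv Mᵀ (by rwa [Matrix.det_transpose])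
  have h2 : Matrix.diagonal d2 = M⁻¹ * Matrix.diagonal d1 * (M⁻¹)ᵀ := by
    rw [Matrix.transpose_nonsing_inv]
    calc Matrix.diagonal d2
        = (M⁻¹ * M) * Matrix.diagonal d2 * (Mᵀ * Mᵀ⁻¹) := by rw [hinv, hinvT]; simp
      _ = M⁻¹ * (M * Matrix.diagonal d2 * Mᵀ) * Mᵀ⁻¹ := by
          simp only [Matrix.mul_assoc]
      _ = M⁻¹ * Matrix.diagonal d1 * Mᵀ⁻¹ := by rw [← h]
  have hMinv : IsUnit M⁻¹ := by
    rw [Matrix.isUnit_iff_isUnit_det, Matrix.det_nonsing_inv]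
    exact isUnit_ringInverse.mpr hdet
  exact le_antisymm (key_le d1 d2 M hM h) (key_le d2 d1 M⁻¹ hMinv h2)

end Aux

/-- Counting eigenvalues via an `LDLᵀ` factorization of the shifted matrix:
if `A - σ·I = L * D * Lᵀ` with `L` invertible and `D` diagonal, then the
number of eigenvalues of the real symmetric matrix `A` below `σ`
(with multiplicity) equals the number of negative diagonal entries of `D`. -/
theorem eigenvalue_count_eq_negative_diag_of_ldlt {n : ℕ}
    (A L D : Matrix (Fin n) (Fin n) ℝ) (hA : A.IsHermitian) (σ : ℝ)
    (hL : IsUnit L) (hD : D.IsDiag)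
    (hfact : A - σ • (1 : Matrix (Fin n) (Fin n) ℝ) = L * D * Lᵀ) :
    (Finset.univ.filter fun i => hA.eigenvalues i < σ).card
      = (Finset.univ.filter fun i => D i i < 0).card := by
  classical
  set U : Matrix (Fin n) (Fin n) ℝ := (hA.eigenvectorUnitary : Matrix (Fin n) (Fin n) ℝ)
    with hUdef
  have hUU : Uᵀ * U = 1 := by
    simpa [hUdef, Matrix.star_eq_conjTranspose,
      Matrix.conjTranspose_eq_transpose_of_trivial] using
      (Matrix.mem_unitaryGroup_iff'.mp hA.eigenvectorUnitary.2)
  have hUUt : U * Uᵀ = 1 := by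
    simpa [hUdef, Matrix.star_eq_conjTranspose,
      Matrix.conjTranspose_eq_transpose_of_trivial] using
      (Matrix.mem_unitaryGroup_iff.mp hA.eigenvectorUnitary.2)
  have hAeq : A = U * Matrix.diagonal hA.eigenvalues * Uᵀ := by
    simpa [hUdef, Matrix.star_eq_conjTranspose,
      Matrix.conjTranspose_eq_transpose_of_trivial, Function.comp] using
      hA.spectral_theorem
  have hDdiag : D = Matrix.diagonal (fun i => D i i) := (hD.diagonal_diag).symm
  -- the shifted spectral factorization
  have hshift : U * Matrix.diagonal (fun i => hA.eigenvalues i - σ) * Uᵀ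
      = L * D * Lᵀ := by
    rw [← hfact]
    have hd : Matrix.diagonal (fun i => hA.eigenvalues i - σ)
        = Matrix.diagonal hA.eigenvalues - σ • (1 : Matrix (Fin n) (Fin n) ℝ) := by
      rw [Matrix.smul_one_eq_diagonal, ← Matrix.diagonal_sub]
    rw [hd, mul_sub, sub_mul, Matrix.mul_smul, Matrix.smul_mul, mul_one, hUUt, ← hAeq]
  have hmain : Matrix.diagonal (fun i => hA.eigenvalues i - σ)
      = (Uᵀ * L) * Matrix.diagonal (fun i => D i i) * (Uᵀ * L)ᵀ := by
    have : Matrix.diagonal (fun i => hA.eigenvalues i - σ)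
        = Uᵀ * (U * Matrix.diagonal (fun i => hA.eigenvalues i - σ) * Uᵀ) * U := by
      simp only [Matrix.mul_assoc, hUUt]
      rw [← Matrix.mul_assoc, hUU]
      simp
    rw [this, hshift, ← hDdiag, Matrix.transpose_mul, Matrix.transpose_transpose]
    simp only [Matrix.mul_assoc]
  have hUnit : IsUnit (Uᵀ * L) := by
    rw [Matrix.isUnit_iff_isUnit_det, Matrix.det_mul]
    have h1 : IsUnit Uᵀ.det :=
      IsUnit.of_mul_eq_one (a := Uᵀ.det) U.det (by rw [← Matrix.det_mul, hUU, Matrix.det_one])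
    exact h1.mul ((Matrix.isUnit_iff_isUnit_det L).mp hL)
  have := key_eq (fun i => hA.eigenvalues i - σ) (fun i => D i i) (Uᵀ * L) hUnit hmain
  simpa [sub_neg] using this
end

section
/- Weyl's perturbation inequality: let A and E be real symmetric n×n matrices, and let λ₁(M) ≤ … ≤ λₙ(M) denote the nondecreasingly ordered eigenvalues (with multiplicity) of a symmetric matrix M. Then for every k ∈ {1,…,n}, |λ_k(A + E) − λ_k(A)| ≤ ‖E‖₂, where ‖E‖₂ is the spectral norm (operator 2-norm) of E. -/
open scoped RealInnerProductSpace
open Submodule Module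


/-- The spectral norm (operator 2-norm) of a real matrix, i.e. the operator
norm of the induced linear map between Euclidean spaces. -/
noncomputable def specNorm {m n : Type*} [Fintype m] [Fintype n] [DecidableEq n]
    (E : Matrix m n ℝ) : ℝ :=
  ‖LinearMap.toContinuousLinearMap (Matrix.toEuclideanLin E)‖


section aux

variable {n : ℕ}

lemma quad_expand {A : Matrix (Fin n) (Fin n) ℝ} (hA : A.IsHermitian)
    (x : EuclideanSpace ℝ (Fin n)) :
    ⟪x, Matrix.toEuclideanLin A x⟫ =
      ∑ j, hA.eigenvalues j * (hA.eigenvectorBasis.repr x j)^2 := by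
  set v := hA.eigenvectorBasis with hv
  have hTv : ∀ j, Matrix.toEuclideanLin A (v j) = hA.eigenvalues j • v j := by
    intro j
    apply (WithLp.equiv 2 _).injective
    simpa [Matrix.toEuclideanLin_apply] using hA.mulVec_eigenvectorBasis j
  have hxv : ∀ j, ⟪x, v j⟫ = v.repr x j := by
    intro j
    rw [real_inner_comm, ← v.repr_apply_apply]
  conv_lhs => rw [← v.sum_repr x, map_sum, inner_sum]
  refine Finset.sum_congr rfl fun j _ => ?_
  rw [map_smul, real_inner_smul_right, hTv j, real_inner_smul_right, v.sum_repr, hxv j]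
  ring

lemma norm_sq_expand (v : OrthonormalBasis (Fin n) ℝ (EuclideanSpace ℝ (Fin n)))
    (x : EuclideanSpace ℝ (Fin n)) :
    ‖x‖^2 = ∑ j, (v.repr x j)^2 := by
  have hxv : ∀ j, ⟪x, v j⟫ = v.repr x j := by
    intro j
    rw [real_inner_comm, ← v.repr_apply_apply]
  rw [← real_inner_self_eq_norm_sq]
  conv_lhs => rw [← v.sum_repr x, inner_sum]
  refine Finset.sum_congr rfl fun j _ => ?_
  rw [real_inner_smul_right, v.sum_repr, hxv j]
  ring

lemma repr_zero_of_mem_span (v : OrthonormalBasis (Fin n) ℝ (EuclideanSpace ℝ (Fin n)))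
    (s : Finset (Fin n)) {x : EuclideanSpace ℝ (Fin n)}
    (hx : x ∈ span ℝ (v '' (s : Set (Fin n)))) {j : Fin n} (hj : j ∉ s) : v.repr x j = 0 := by
  have hle : span ℝ (v '' (s : Set (Fin n))) ≤ LinearMap.ker ((innerSL ℝ (v j) : EuclideanSpace ℝ (Fin n) →L[ℝ] ℝ) : EuclideanSpace ℝ (Fin n) →ₗ[ℝ] ℝ) := by
    refine span_le.mpr ?_
    rintro _ ⟨i, hi, rfl⟩
    have hij : j ≠ i := fun h => hj (h ▸ hi)
    simpa [LinearMap.mem_ker] using v.orthonormal.2 hij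
  have h0 := hle hx
  rw [LinearMap.mem_ker] at h0
  rw [v.repr_apply_apply]
  simpa using h0

lemma quad_lower {A : Matrix (Fin n) (Fin n) ℝ} (hA : A.IsHermitian)
    (s : Finset (Fin n)) (c : ℝ) (hc : ∀ j ∈ s, c ≤ hA.eigenvalues j)
    {x : EuclideanSpace ℝ (Fin n)}
    (hx : x ∈ span ℝ (hA.eigenvectorBasis '' (s : Set (Fin n)))) :
    c * ‖x‖^2 ≤ ⟪x, Matrix.toEuclideanLin A x⟫ := by
  rw [quad_expand hA, norm_sq_expand hA.eigenvectorBasis, Finset.mul_sum]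
  refine Finset.sum_le_sum fun j _ => ?_
  by_cases hj : j ∈ s
  · nlinarith [hc j hj, sq_nonneg (hA.eigenvectorBasis.repr x j)]
  · rw [repr_zero_of_mem_span _ s hx hj]; simp

lemma quad_upper {A : Matrix (Fin n) (Fin n) ℝ} (hA : A.IsHermitian)
    (s : Finset (Fin n)) (c : ℝ) (hc : ∀ j ∈ s, hA.eigenvalues j ≤ c)
    {x : EuclideanSpace ℝ (Fin n)}
    (hx : x ∈ span ℝ (hA.eigenvectorBasis '' (s : Set (Fin n)))) :
    ⟪x, Matrix.toEuclideanLin A x⟫ ≤ c * ‖x‖^2 := by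
  rw [quad_expand hA, norm_sq_expand hA.eigenvectorBasis, Finset.mul_sum]
  refine Finset.sum_le_sum fun j _ => ?_
  by_cases hj : j ∈ s
  · nlinarith [hc j hj, sq_nonneg (hA.eigenvectorBasis.repr x j)]
  · rw [repr_zero_of_mem_span _ s hx hj]; simp

lemma quad_abs_le (E : Matrix (Fin n) (Fin n) ℝ) (x : EuclideanSpace ℝ (Fin n)) :
    |⟪x, Matrix.toEuclideanLin E x⟫| ≤ specNorm E * ‖x‖^2 := by
  calc |⟪x, Matrix.toEuclideanLin E x⟫| ≤ ‖x‖ * ‖Matrix.toEuclideanLin E x‖ :=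
        abs_real_inner_le_norm _ _
    _ ≤ ‖x‖ * (specNorm E * ‖x‖) := by
        refine mul_le_mul_of_nonneg_left ?_ (norm_nonneg _)
        exact (LinearMap.toContinuousLinearMap (Matrix.toEuclideanLin E)).le_opNorm x
    _ = specNorm E * ‖x‖^2 := by ring

lemma finrank_span_onb_image (v : OrthonormalBasis (Fin n) ℝ (EuclideanSpace ℝ (Fin n)))
    (s : Finset (Fin n)) : finrank ℝ (span ℝ (v '' (s : Set (Fin n)))) = s.card := by
  have hli : LinearIndependent ℝ ((fun i => v i) ∘ (Subtype.val : {x // x ∈ s} → Fin n)) := by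
    have h := v.toBasis.linearIndependent
    rw [OrthonormalBasis.coe_toBasis] at h
    exact h.comp _ Subtype.val_injective
  have h2 := finrank_span_eq_card hli
  rw [Set.range_comp] at h2
  have hset : (fun i => v i) '' Set.range (Subtype.val : {x // x ∈ s} → Fin n)
      = v '' (s : Set (Fin n)) := by rw [Subtype.range_val]
  rw [hset] at h2
  rw [h2, Fintype.card_coe]

lemma weyl_one_sided (A B : Matrix (Fin n) (Fin n) ℝ)
    (hA : A.IsHermitian) (hB : B.IsHermitian)
    (μ ν : Fin n → ℝ) (hμmono : Monotone μ) (hνmono : Monotone ν)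
    (d e : Equiv.Perm (Fin n))
    (hμ : μ = hA.eigenvalues ∘ d) (hν : ν = hB.eigenvalues ∘ e)
    (k : Fin n) : μ k ≤ ν k + specNorm (A - B) := by
  classical
  set u := hA.eigenvectorBasis
  set v := hB.eigenvectorBasis
  set sA : Finset (Fin n) := (Finset.Ici k).map d.toEmbedding with hsA
  set sB : Finset (Fin n) := (Finset.Iic k).map e.toEmbedding with hsB
  set S : Submodule ℝ (EuclideanSpace ℝ (Fin n)) := span ℝ (u '' (sA : Set (Fin n))) with hS
  set T : Submodule ℝ (EuclideanSpace ℝ (Fin n)) := span ℝ (v '' (sB : Set (Fin n))) with hT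
  have hdimS : finrank ℝ S = n - (k : ℕ) := by
    rw [hS, finrank_span_onb_image]; simp [hsA, Fin.card_Ici]
  have hdimT : finrank ℝ T = (k : ℕ) + 1 := by
    rw [hT, finrank_span_onb_image]; simp [hsB, Fin.card_Iic]
  have hsum := Submodule.finrank_sup_add_finrank_inf_eq S T
  have hle : finrank ℝ ↥(S ⊔ T) ≤ n := by
    simpa [finrank_euclideanSpace_fin] using Submodule.finrank_le (S ⊔ T)
  have hpos : 0 < finrank ℝ ↥(S ⊓ T) := by
    have hk : (k : ℕ) < n := k.isLt
    omega
  have hnt : Nontrivial ↥(S ⊓ T) := Module.finrank_pos_iff.mp hpos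
  obtain ⟨y, hy0⟩ := exists_ne (0 : ↥(S ⊓ T))
  set x := (y : EuclideanSpace ℝ (Fin n)) with hxdef
  have hx0 : x ≠ 0 := fun h => hy0 (Subtype.ext h)
  have hxS : x ∈ S := y.2.1
  have hxT : x ∈ T := y.2.2
  have h1 : μ k * ‖x‖^2 ≤ ⟪x, Matrix.toEuclideanLin A x⟫ := by
    refine quad_lower hA sA (μ k) ?_ hxS
    intro j hj
    rw [hsA] at hj
    simp only [Finset.mem_map, Finset.mem_Ici, Equiv.coe_toEmbedding] at hj
    obtain ⟨i, hi, rfl⟩ := hj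
    exact (hμmono hi).trans_eq (by rw [hμ]; rfl)
  have h2 : ⟪x, Matrix.toEuclideanLin B x⟫ ≤ ν k * ‖x‖^2 := by
    refine quad_upper hB sB (ν k) ?_ hxT
    intro j hj
    rw [hsB] at hj
    simp only [Finset.mem_map, Finset.mem_Iic, Equiv.coe_toEmbedding] at hj
    obtain ⟨i, hi, rfl⟩ := hj
    exact le_of_eq_of_le (by rw [hν]; rfl) (hνmono hi)
  have h3 : ⟪x, Matrix.toEuclideanLin (A - B) x⟫ =
      ⟪x, Matrix.toEuclideanLin A x⟫ - ⟪x, Matrix.toEuclideanLin B x⟫ := by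
    rw [map_sub]
    simp [inner_sub_right]
  have h4 := quad_abs_le (A - B) x
  have h6 : ⟪x, Matrix.toEuclideanLin (A - B) x⟫ ≤ specNorm (A - B) * ‖x‖^2 :=
    le_of_abs_le h4
  have hq : 0 < ‖x‖^2 := pow_pos (norm_pos_iff.mpr hx0) 2
  have hfin : μ k * ‖x‖^2 ≤ (ν k + specNorm (A - B)) * ‖x‖^2 := by nlinarith [h1, h2, h3, h6]
  exact le_of_mul_le_mul_right hfin hq

end aux

/-- Weyl's perturbation inequality: if `μ` and `ν` are the nondecreasing
enumerations (with multiplicity) of the eigenvalues of the real symmetric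
matrices `A` and `A + E`, then `|ν k - μ k| ≤ ‖E‖₂` for every `k`. -/
theorem weyl_perturbation {n : ℕ}
    (A E : Matrix (Fin n) (Fin n) ℝ) (hA : A.IsHermitian) (hE : E.IsHermitian)
    (μ ν : Fin n → ℝ) (hμmono : Monotone μ) (hνmono : Monotone ν)
    (d e : Equiv.Perm (Fin n))
    (hμ : μ = hA.eigenvalues ∘ d) (hν : ν = (hA.add hE).eigenvalues ∘ e) :
    ∀ k : Fin n, |ν k - μ k| ≤ specNorm E := by
  intro k
  have hB : (A + E).IsHermitian := hA.add hE
  have h1 : μ k ≤ ν k + specNorm (A - (A + E)) :=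
    weyl_one_sided A (A + E) hA hB μ ν hμmono hνmono d e hμ hν k
  have h2 : ν k ≤ μ k + specNorm ((A + E) - A) :=
    weyl_one_sided (A + E) A hB hA ν μ hνmono hμmono e d hν hμ k
  have e1 : A - (A + E) = -E := by abel
  have e2 : (A + E) - A = E := by abel
  have e3 : specNorm (-E : Matrix (Fin n) (Fin n) ℝ) = specNorm E := by
    have hm : Matrix.toEuclideanLin (-E) = -(Matrix.toEuclideanLin E) := map_neg _ _
    rw [specNorm, specNorm, hm, map_neg, norm_neg]
  rw [e1, e3] at h1
  rw [e2] at h2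
  rw [abs_sub_le_iff]
  constructor <;> linarith
end

section
/- Accuracy criterion for the approximate factorization (Parlett's condition): let A and H be real symmetric n×n matrices and σ ∈ ℝ, and suppose the spectral norm of the factorization error satisfies ‖H‖₂ < min_{1≤j≤n} |λ_j(A) − σ|. Then the number of negative eigenvalues (with multiplicity) of the symmetric matrix (A − σI) − H equals ν_A(σ) = #{j : λ_j(A) < σ}, i.e., the approximate factorization yields the correct eigenvalue count at the shift σ. -/
open Finset

/-- `σ • I` is a real symmetric matrix. -/
theorem smul_one_isHermitian {n : ℕ} (σ : ℝ) :
    ((σ • 1 : Matrix (Fin n) (Fin n) ℝ)).IsHermitian := by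
  simp [Matrix.IsHermitian]

section Aux
variable {n : ℕ}

noncomputable def qf (M : Matrix (Fin n) (Fin n) ℝ) (x : EuclideanSpace ℝ (Fin n)) : ℝ :=
  inner ℝ x (Matrix.toEuclideanLin M x)

lemma qf_abs_le (M : Matrix (Fin n) (Fin n) ℝ) (x : EuclideanSpace ℝ (Fin n)) :
    |qf M x| ≤ specNorm M * ‖x‖ ^ 2 := by
  have h1 := abs_real_inner_le_norm x (Matrix.toEuclideanLin M x)
  have h2 := (LinearMap.toContinuousLinearMap (Matrix.toEuclideanLin M)).le_opNorm x
  calc |qf M x| ≤ ‖x‖ * ‖Matrix.toEuclideanLin M x‖ := h1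
    _ ≤ ‖x‖ * (specNorm M * ‖x‖) := by
        apply mul_le_mul_of_nonneg_left _ (norm_nonneg x)
        exact h2
    _ = specNorm M * ‖x‖ ^ 2 := by ring

lemma toEuclideanLin_eigen {M : Matrix (Fin n) (Fin n) ℝ} (hM : M.IsHermitian) (i : Fin n) :
    Matrix.toEuclideanLin M (hM.eigenvectorBasis i) = hM.eigenvalues i • hM.eigenvectorBasis i := by
  ext j
  have := congrFun (hM.mulVec_eigenvectorBasis i) j
  simpa [Matrix.toEuclideanLin_apply] using this

lemma qf_eq_sum {M : Matrix (Fin n) (Fin n) ℝ} (hM : M.IsHermitian)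
    (x : EuclideanSpace ℝ (Fin n)) :
    qf M x = ∑ i, hM.eigenvalues i * (inner ℝ (hM.eigenvectorBasis i) x : ℝ) ^ 2 := by
  set b := hM.eigenvectorBasis with hb
  have hMx : Matrix.toEuclideanLin M x
      = ∑ i, ((inner ℝ (b i) x : ℝ) * hM.eigenvalues i) • b i := by
    conv_lhs => rw [← b.sum_repr x]
    rw [map_sum]
    congr 1; ext i
    rw [map_smul, b.repr_apply_apply, toEuclideanLin_eigen hM i, smul_smul]
  rw [qf, hMx, inner_sum]
  congr 1; ext i
  rw [real_inner_smul_right, real_inner_comm x (b i)]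
  ring

lemma norm_sq_eq_sum (b : OrthonormalBasis (Fin n) ℝ (EuclideanSpace ℝ (Fin n)))
    (x : EuclideanSpace ℝ (Fin n)) :
    ‖x‖ ^ 2 = ∑ i, (inner ℝ (b i) x : ℝ) ^ 2 := by
  have h := b.sum_inner_mul_inner x x
  rw [← real_inner_self_eq_norm_sq, ← h]
  congr 1; ext i
  rw [real_inner_comm x (b i)]; ring

lemma inner_eq_zero_of_mem_span
    (b : OrthonormalBasis (Fin n) ℝ (EuclideanSpace ℝ (Fin n))) (S : Finset (Fin n))
    {x : EuclideanSpace ℝ (Fin n)} (hx : x ∈ Submodule.span ℝ (b '' ↑S))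
    {i : Fin n} (hi : i ∉ S) : (inner ℝ (b i) x : ℝ) = 0 := by
  induction hx using Submodule.span_induction with
  | mem y hy =>
      obtain ⟨j, hj, rfl⟩ := hy
      exact b.orthonormal.2 (fun h => hi (h ▸ hj))
  | zero => simp
  | add y z _ _ hy hz => rw [inner_add_right, hy, hz, add_zero]
  | smul c y _ hy => rw [real_inner_smul_right, hy, mul_zero]

lemma finrank_span_basis_image
    (b : OrthonormalBasis (Fin n) ℝ (EuclideanSpace ℝ (Fin n))) (S : Finset (Fin n)) :
    Module.finrank ℝ (Submodule.span ℝ (b '' ↑S)) = S.card := by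
  have h1 : Orthonormal ℝ (fun i : S => b i) :=
    b.orthonormal.comp _ Subtype.val_injective
  have h2 : LinearIndependent ℝ (fun i : S => b i) := h1.linearIndependent
  have h3 : Set.range (fun i : S => b i) = b '' ↑S := by
    ext y; simp [Set.mem_image]
  rw [← h3, finrank_span_eq_card h2, Fintype.card_coe]

lemma eq_zero_of_inner_eq_zero (b : OrthonormalBasis (Fin n) ℝ (EuclideanSpace ℝ (Fin n)))
    {x : EuclideanSpace ℝ (Fin n)} (h : ∀ i, (inner ℝ (b i) x : ℝ) = 0) : x = 0 := by
  rw [← b.sum_repr x]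
  simp only [b.repr_apply_apply, h, zero_smul, Finset.sum_const_zero]

lemma count_ge {M : Matrix (Fin n) (Fin n) ℝ} (hM : M.IsHermitian)
    (V : Submodule ℝ (EuclideanSpace ℝ (Fin n)))
    (hV : ∀ x ∈ V, x ≠ 0 → qf M x < 0) :
    Module.finrank ℝ V ≤ (univ.filter fun i => hM.eigenvalues i < 0).card := by
  set b := hM.eigenvectorBasis
  set S : Finset (Fin n) := univ.filter fun i => ¬ hM.eigenvalues i < 0 with hS
  set W := Submodule.span ℝ (b '' ↑S)
  have hWpos : ∀ x ∈ W, 0 ≤ qf M x := by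
    intro x hx
    rw [qf_eq_sum hM x]
    apply Finset.sum_nonneg
    intro i _
    by_cases hi : i ∈ S
    · have : 0 ≤ hM.eigenvalues i := by
        simp only [hS, mem_filter, mem_univ, true_and] at hi; linarith
      positivity
    · rw [inner_eq_zero_of_mem_span b S hx hi]; ring_nf; simp
  have hdisj : Disjoint V W := by
    rw [Submodule.disjoint_def]
    intro x hxV hxW
    by_contra hne
    exact absurd (hWpos x hxW) (not_le.2 (hV x hxV hne))
  have := Submodule.finrank_add_finrank_le_of_disjoint hdisj
  rw [finrank_span_basis_image b S, finrank_euclideanSpace_fin] at this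
  have hcard : (univ.filter fun i => hM.eigenvalues i < 0).card + S.card = n := by
    rw [hS, Finset.card_filter_add_card_filter_not]
    simp
  omega

lemma count_le {M : Matrix (Fin n) (Fin n) ℝ} (hM : M.IsHermitian)
    (V : Submodule ℝ (EuclideanSpace ℝ (Fin n)))
    (hV : ∀ x ∈ V, x ≠ 0 → 0 < qf M x) :
    (univ.filter fun i => hM.eigenvalues i < 0).card + Module.finrank ℝ V ≤ n := by
  set b := hM.eigenvectorBasis
  set S : Finset (Fin n) := univ.filter fun i => hM.eigenvalues i < 0 with hS
  set W := Submodule.span ℝ (b '' ↑S)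
  have hWneg : ∀ x ∈ W, qf M x ≤ 0 := by
    intro x hx
    rw [qf_eq_sum hM x]
    apply Finset.sum_nonpos
    intro i _
    by_cases hi : i ∈ S
    · have h1 : hM.eigenvalues i < 0 := by
        simp only [hS, mem_filter, mem_univ, true_and] at hi; exact hi
      exact mul_nonpos_of_nonpos_of_nonneg h1.le (sq_nonneg _)
    · rw [inner_eq_zero_of_mem_span b S hx hi]; ring_nf; simp
  have hdisj : Disjoint W V := by
    rw [Submodule.disjoint_def]
    intro x hxW hxV
    by_contra hne
    exact absurd (hWneg x hxW) (not_le.2 (hV x hxV hne))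
  have := Submodule.finrank_add_finrank_le_of_disjoint hdisj
  rw [finrank_span_basis_image b S, finrank_euclideanSpace_fin] at this
  exact this

lemma qf_shift (A H : Matrix (Fin n) (Fin n) ℝ) (σ : ℝ) (x : EuclideanSpace ℝ (Fin n)) :
    qf ((A - σ • 1) - H) x = qf A x - σ * ‖x‖ ^ 2 - qf H x := by
  have hone : Matrix.toEuclideanLin (1 : Matrix (Fin n) (Fin n) ℝ) x = x := by
    ext j
    simp [Matrix.toEuclideanLin_apply]
  unfold qf
  rw [map_sub, map_sub, map_smul]
  simp only [LinearMap.sub_apply, LinearMap.smul_apply, inner_sub_right, hone,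
    real_inner_smul_right, real_inner_self_eq_norm_sq]

end Aux

/-- Parlett's accuracy criterion: if the factorization error `H` of an
approximate factorization of `A - σ·I` satisfies
`‖H‖₂ < min_j |λ_j(A) - σ|`, then the number of negative eigenvalues
(with multiplicity) of the symmetric matrix `(A - σ·I) - H` equals
`ν_A(σ) = #{j : λ_j(A) < σ}`, i.e. the approximate factorization yields the
correct eigenvalue count at the shift `σ`. -/
theorem approximate_factorization_correct_count {n : ℕ}
    (A H : Matrix (Fin n) (Fin n) ℝ) (hA : A.IsHermitian) (hH : H.IsHermitian)
    (σ : ℝ)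
    (hsmall : ∀ j : Fin n, specNorm H < |hA.eigenvalues j - σ|) :
    (Finset.univ.filter fun i =>
        ((hA.sub (smul_one_isHermitian σ)).sub hH).eigenvalues i < 0).card
      = (Finset.univ.filter fun j => hA.eigenvalues j < σ).card := by
  set hM := (hA.sub (smul_one_isHermitian σ)).sub hH
  set b := hA.eigenvectorBasis with hbdef
  set Sm : Finset (Fin n) := univ.filter fun j => hA.eigenvalues j < σ with hSm
  set Sp : Finset (Fin n) := univ.filter fun j => ¬ hA.eigenvalues j < σ with hSp
  have hHnn : 0 ≤ specNorm H := norm_nonneg _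
  -- the quadratic form of M in terms of A's eigendata
  have hqfM : ∀ x : EuclideanSpace ℝ (Fin n),
      qf ((A - σ • 1) - H) x
        = (∑ i, (hA.eigenvalues i - σ) * (inner ℝ (b i) x : ℝ) ^ 2) - qf H x := by
    intro x
    rw [qf_shift, qf_eq_sum hA x, norm_sq_eq_sum b x, Finset.mul_sum, ← Finset.sum_sub_distrib]
    congr 1
    congr 1; ext i
    ring
  -- x ≠ 0 has a nonzero coefficient
  have hex : ∀ (x : EuclideanSpace ℝ (Fin n)), x ≠ 0 → ∃ i, (inner ℝ (b i) x : ℝ) ≠ 0 := by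
    intro x hx
    by_contra hc
    push_neg at hc
    exact hx (eq_zero_of_inner_eq_zero b hc)
  -- negative definiteness on V₋
  have hneg : ∀ x ∈ Submodule.span ℝ (b '' ↑Sm), x ≠ 0 → qf ((A - σ • 1) - H) x < 0 := by
    intro x hx hx0
    have hsum : (∑ i, (hA.eigenvalues i - σ) * (inner ℝ (b i) x : ℝ) ^ 2)
        < ∑ i, (-specNorm H) * (inner ℝ (b i) x : ℝ) ^ 2 := by
      obtain ⟨i0, hi0⟩ := hex x hx0
      have hi0m : i0 ∈ Sm := by
        by_contra hc
        exact hi0 (inner_eq_zero_of_mem_span b Sm hx hc)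
      apply Finset.sum_lt_sum
      · intro i _
        by_cases hi : i ∈ Sm
        · have h1 : hA.eigenvalues i < σ := by
            simp only [hSm, mem_filter, mem_univ, true_and] at hi; exact hi
          have h2 : hA.eigenvalues i - σ ≤ -specNorm H := by
            have := hsmall i
            rw [abs_of_neg (by linarith : hA.eigenvalues i - σ < 0)] at this
            linarith
          exact mul_le_mul_of_nonneg_right h2 (sq_nonneg _)
        · rw [inner_eq_zero_of_mem_span b Sm hx hi]; ring_nf; rfl
      · refine ⟨i0, Finset.mem_univ _, ?_⟩
        have h1 : hA.eigenvalues i0 < σ := by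
          simp only [hSm, mem_filter, mem_univ, true_and] at hi0m; exact hi0m
        have h2 : hA.eigenvalues i0 - σ < -specNorm H := by
          have := hsmall i0
          rw [abs_of_neg (by linarith : hA.eigenvalues i0 - σ < 0)] at this
          linarith
        exact mul_lt_mul_of_pos_right h2 (by positivity)
    have habs := qf_abs_le H x
    have h3 : ∑ i, (-specNorm H) * (inner ℝ (b i) x : ℝ) ^ 2 = -(specNorm H * ‖x‖ ^ 2) := by
      rw [norm_sq_eq_sum b x, Finset.mul_sum]
      simp [neg_mul]
    have h4 := abs_le.1 habs
    rw [hqfM x]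
    rw [h3] at hsum
    linarith [h4.1]
  -- positive definiteness on V₊
  have hpos : ∀ x ∈ Submodule.span ℝ (b '' ↑Sp), x ≠ 0 → 0 < qf ((A - σ • 1) - H) x := by
    intro x hx hx0
    have hsum : (∑ i, (specNorm H) * (inner ℝ (b i) x : ℝ) ^ 2)
        < ∑ i, (hA.eigenvalues i - σ) * (inner ℝ (b i) x : ℝ) ^ 2 := by
      obtain ⟨i0, hi0⟩ := hex x hx0
      have hi0m : i0 ∈ Sp := by
        by_contra hc
        exact hi0 (inner_eq_zero_of_mem_span b Sp hx hc)
      apply Finset.sum_lt_sum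
      · intro i _
        by_cases hi : i ∈ Sp
        · have h1 : σ ≤ hA.eigenvalues i := by
            simp only [hSp, mem_filter, mem_univ, true_and] at hi; linarith [not_lt.1 hi]
          have h2 : specNorm H ≤ hA.eigenvalues i - σ := by
            have := hsmall i
            rw [abs_of_nonneg (by linarith : (0:ℝ) ≤ hA.eigenvalues i - σ)] at this
            linarith
          exact mul_le_mul_of_nonneg_right h2 (sq_nonneg _)
        · rw [inner_eq_zero_of_mem_span b Sp hx hi]; ring_nf; rfl
      · refine ⟨i0, Finset.mem_univ _, ?_⟩
        have h1 : σ ≤ hA.eigenvalues i0 := by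
          simp only [hSp, mem_filter, mem_univ, true_and] at hi0m; linarith [not_lt.1 hi0m]
        have h2 : specNorm H < hA.eigenvalues i0 - σ := by
          have := hsmall i0
          rw [abs_of_nonneg (by linarith : (0:ℝ) ≤ hA.eigenvalues i0 - σ)] at this
          linarith
        exact mul_lt_mul_of_pos_right h2 (by positivity)
    have habs := qf_abs_le H x
    have h3 : ∑ i, (specNorm H) * (inner ℝ (b i) x : ℝ) ^ 2 = specNorm H * ‖x‖ ^ 2 := by
      rw [norm_sq_eq_sum b x, Finset.mul_sum]
    have h4 := abs_le.1 habs
    rw [hqfM x]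
    rw [h3] at hsum
    linarith [h4.2]
  -- combine
  have h1 := count_ge hM (Submodule.span ℝ (b '' ↑Sm)) hneg
  have h2 := count_le hM (Submodule.span ℝ (b '' ↑Sp)) hpos
  rw [finrank_span_basis_image b Sm] at h1
  rw [finrank_span_basis_image b Sp] at h2
  have hcard : Sm.card + Sp.card = n := by
    rw [hSm, hSp, Finset.card_filter_add_card_filter_not]
    simp
  omega
end

section
/- Two-level error representation of the adaptive cluster basis construction (combining equations (error 2) and the son-splitting identity): let Q₁ ∈ ℝ^{m₁×k} and Q₂ ∈ ℝ^{m₂×k} have orthonormal columns (QᵢᵀQᵢ = I_k), let U := diag(Q₁, Q₂) be the block-diagonal (m₁+m₂)×2k matrix, let Q̂ ∈ ℝ^{2k×k} have orthonormal columns, set Q := U Q̂, and let M = [M₁; M₂] be any real (m₁+m₂)×q matrix with blocks M₁ ∈ ℝ^{m₁×q}, M₂ ∈ ℝ^{m₂×q}. Then ‖Q Qᵀ M − M‖_F² = ‖Q̂ Q̂ᵀ (Uᵀ M) − Uᵀ M‖_F² + ‖Q₁ Q₁ᵀ M₁ − M₁‖_F² + ‖Q₂ Q₂ᵀ M₂ −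 M₂‖_F², so the truncation error of the father cluster decomposes exactly into the truncated-SVD error at the father and the projection errors of the two sons. -/
open Matrix

/-- The Frobenius norm of a real matrix: the square root of the sum of the
squares of its entries. -/
noncomputable def frob {m n : Type*} [Fintype m] [Fintype n]
    (A : Matrix m n ℝ) : ℝ :=
  Real.sqrt (∑ i, ∑ j, (A i j) ^ 2)

lemma frob_sq_eq_trace {m n : Type*} [Fintype m] [Fintype n]
    (A : Matrix m n ℝ) : frob A ^ 2 = Matrix.trace (Aᵀ * A) := by
  rw [frob, Real.sq_sqrt (by positivity)]
  rw [Finset.sum_comm]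
  simp [Matrix.trace, Matrix.mul_apply, Matrix.diag, sq]

/-- Two-level error representation of the adaptive cluster basis
construction: with orthonormal son bases `Q₁, Q₂`, `U = diag(Q₁, Q₂)`,
an orthonormal `Q̂` and `Q = U Q̂`, the truncation error of the father
cluster decomposes exactly as
`‖Q Qᵀ M - M‖_F² = ‖Q̂ Q̂ᵀ (Uᵀ M) - Uᵀ M‖_F²
   + ‖Q₁ Q₁ᵀ M₁ - M₁‖_F² + ‖Q₂ Q₂ᵀ M₂ - M₂‖_F²`. -/
theorem two_level_error_representation {m₁ m₂ k q : ℕ}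
    (Q₁ : Matrix (Fin m₁) (Fin k) ℝ) (Q₂ : Matrix (Fin m₂) (Fin k) ℝ)
    (hQ₁ : Q₁ᵀ * Q₁ = 1) (hQ₂ : Q₂ᵀ * Q₂ = 1)
    (U : Matrix (Fin m₁ ⊕ Fin m₂) (Fin k ⊕ Fin k) ℝ)
    (hU : U = Matrix.fromBlocks Q₁ 0 0 Q₂)
    (Qhat : Matrix (Fin k ⊕ Fin k) (Fin k) ℝ) (hQhat : Qhatᵀ * Qhat = 1)
    (Q : Matrix (Fin m₁ ⊕ Fin m₂) (Fin k) ℝ) (hQ : Q = U * Qhat)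
    (M₁ : Matrix (Fin m₁) (Fin q) ℝ) (M₂ : Matrix (Fin m₂) (Fin q) ℝ)
    (M : Matrix (Fin m₁ ⊕ Fin m₂) (Fin q) ℝ) (hM : M = Matrix.fromRows M₁ M₂) :
    frob (Q * Qᵀ * M - M) ^ 2
      = frob (Qhat * Qhatᵀ * (Uᵀ * M) - Uᵀ * M) ^ 2
        + frob (Q₁ * Q₁ᵀ * M₁ - M₁) ^ 2 + frob (Q₂ * Q₂ᵀ * M₂ - M₂) ^ 2 := by
  have hUU : Uᵀ * U = 1 := by
    rw [hU]
    simp [Matrix.fromBlocks_transpose, Matrix.fromBlocks_multiply, hQ₁, hQ₂,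
      ← Matrix.fromBlocks_one]
  set E : Matrix (Fin k ⊕ Fin k) (Fin q) ℝ := Qhat * Qhatᵀ * (Uᵀ * M) - Uᵀ * M with hE
  set F : Matrix (Fin m₁ ⊕ Fin m₂) (Fin q) ℝ := U * (Uᵀ * M) - M with hF
  have hX : Q * Qᵀ * M - M = U * E + F := by
    rw [hQ, hE, hF]
    simp only [Matrix.transpose_mul, Matrix.mul_sub]
    rw [← Matrix.mul_assoc, ← Matrix.mul_assoc, ← Matrix.mul_assoc, ← Matrix.mul_assoc]
    abel
  have hUF : Uᵀ * F = 0 := by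
    rw [hF, Matrix.mul_sub, ← Matrix.mul_assoc, hUU, Matrix.one_mul, sub_self]
  have hFrows : F = Matrix.fromRows (Q₁ * Q₁ᵀ * M₁ - M₁) (Q₂ * Q₂ᵀ * M₂ - M₂) := by
    rw [hF, hU, hM, Matrix.fromBlocks_transpose, Matrix.fromBlocks_mul_fromRows,
      Matrix.fromBlocks_mul_fromRows]
    ext (i | i) j <;>
      simp [Matrix.fromRows_apply_inl, Matrix.fromRows_apply_inr, Matrix.sub_apply, Matrix.mul_assoc]
  rw [hX, frob_sq_eq_trace, frob_sq_eq_trace, frob_sq_eq_trace, frob_sq_eq_trace]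
  have expand : (U * E + F)ᵀ * (U * E + F)
      = Eᵀ * E + (Eᵀ * (Uᵀ * F) + (Uᵀ * F)ᵀ * E + Fᵀ * F) := by
    simp only [Matrix.transpose_add, Matrix.transpose_mul, Matrix.transpose_transpose,
      Matrix.add_mul, Matrix.mul_add, Matrix.mul_assoc]
    rw [show Uᵀ * (U * E) = E by rw [← Matrix.mul_assoc, hUU, Matrix.one_mul]]
    abel
  rw [expand, hUF]
  simp only [Matrix.mul_zero, Matrix.transpose_zero, Matrix.zero_mul, add_zero, zero_add,
    Matrix.trace_add]
  rw [hFrows, Matrix.transpose_fromRows, Matrix.fromCols_mul_fromRows, Matrix.trace_add]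
  ring
end
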